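/- Let A ∈ ℝ^{m×n} and B ∈ ℝ^{m×d}, and let OPT = inf over C' ∈ ℝ^{m×(n+d)} with rank(C') ≤ n of ‖C' − [A, B]‖_F. Then for every δ > 0 there exist X ∈ ℝ^{n×d} and Â ∈ ℝ^{m×n} such that ‖[Â, ÂX] − [A, B]‖_F ≤ OPT + δ. -/

import Mathlib

open Matrix

/-- The Frobenius norm of a real matrix. -/
noncomputable def frobNorm {m n : Type*} [Fintype m] [Fintype n]
    (M : Matrix m n ℝ) : ℝ :=
  Real.sqrt (∑ i, ∑ j, (M i j) ^ 2)

lemma frobNorm_eq_norm {m n : Type*} [Fintype m] [Fintype n] (M : Matrix m n ℝ) :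
    frobNorm M = ‖(show EuclideanSpace ℝ (m × n) from WithLp.toLp 2 fun p : m × n => M p.1 p.2)‖ := by
  rw [EuclideanSpace.norm_eq, frobNorm]
  congr 1
  rw [show (∑ i : m × n,
      ‖(show EuclideanSpace ℝ (m × n) from WithLp.toLp 2 fun p : m × n => M p.1 p.2) i‖ ^ 2)
      = ∑ i : m × n, (M i.1 i.2) ^ 2 from by
    refine Finset.sum_congr rfl fun p _ => ?_
    simp [Real.norm_eq_abs, sq_abs]]
  exact (Fintype.sum_prod_type (fun p : m × n => M p.1 p.2 ^ 2)).symm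

lemma frobNorm_nonneg {m n : Type*} [Fintype m] [Fintype n] (M : Matrix m n ℝ) :
    0 ≤ frobNorm M := Real.sqrt_nonneg _

lemma frobNorm_add_le {m n : Type*} [Fintype m] [Fintype n] (P Q : Matrix m n ℝ) :
    frobNorm (P + Q) ≤ frobNorm P + frobNorm Q := by
  rw [frobNorm_eq_norm, frobNorm_eq_norm, frobNorm_eq_norm]
  exact norm_add_le (E := EuclideanSpace ℝ (m × n)) (WithLp.toLp 2 fun p : m × n => P p.1 p.2)
    (WithLp.toLp 2 fun p : m × n => Q p.1 p.2)

lemma frobNorm_smul {m n : Type*} [Fintype m] [Fintype n] (t : ℝ) (M : Matrix m n ℝ) :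
    frobNorm (t • M) = |t| * frobNorm M := by
  simp only [frobNorm, Matrix.smul_apply, smul_eq_mul, mul_pow]
  simp_rw [← Finset.mul_sum]
  rw [Real.sqrt_mul (sq_nonneg t), Real.sqrt_sq_eq_abs]

lemma frobNorm_fromCols_zero {m α β : Type*} [Fintype m] [Fintype α] [Fintype β]
    (P : Matrix m α ℝ) :
    frobNorm (fromCols P (0 : Matrix m β ℝ)) = frobNorm P := by
  simp [frobNorm, Fintype.sum_sum_type]

lemma exists_factorization {m : ℕ} {κ : Type*} [Fintype κ] [DecidableEq κ] (n : ℕ)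
    (C : Matrix (Fin m) κ ℝ) (h : C.rank ≤ n) :
    ∃ (U : Matrix (Fin m) (Fin n) ℝ) (V : Matrix (Fin n) κ ℝ), C = U * V := by
  classical
  set W := LinearMap.range C.mulVecLin with hW
  have hfr : Module.finrank ℝ W ≤ n := h
  let b := Module.finBasis ℝ W
  let U : Matrix (Fin m) (Fin n) ℝ :=
    Matrix.of fun i k =>
      if hk : (k : ℕ) < Module.finrank ℝ W then ((b ⟨k, hk⟩ : Fin m → ℝ) i) else 0
  have hle : W ≤ Submodule.span ℝ (Set.range Uᵀ) := by
    have hWspan : W = Submodule.span ℝ (Set.range (fun k => ((b k : Fin m → ℝ)))) := by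
      conv_lhs => rw [← Submodule.map_subtype_top W]
      rw [← b.span_eq, Submodule.map_span]
      congr 1
      ext x
      simp [Set.range_comp]
    rw [hWspan]
    refine Submodule.span_le.2 ?_
    rintro x ⟨k, rfl⟩
    refine Submodule.subset_span ⟨Fin.castLE hfr k, ?_⟩
    ext i
    simp only [transpose_apply, U, Matrix.of_apply]
    rw [dif_pos (by simp)]
    congr 1
  have key : ∀ j : κ, ∃ v : Fin n → ℝ, U.mulVec v = fun i => C i j := by
    intro j
    have hcol : (fun i => C i j) ∈ W := by
      refine ⟨Pi.single j 1, ?_⟩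
      ext i
      simp [Matrix.mulVecLin_apply, Matrix.mulVec_single_one]
    have : (fun i => C i j) ∈ LinearMap.range U.mulVecLin := by
      rw [Matrix.range_mulVecLin]
      exact hle hcol
    obtain ⟨v, hv⟩ := this
    exact ⟨v, hv⟩
  choose v hv using key
  refine ⟨U, Matrix.of fun k j => v j k, ?_⟩
  ext i j
  rw [Matrix.mul_apply]
  have := congrFun (hv j) i
  simpa [Matrix.mulVec, dotProduct] using this.symm

lemma det_add_smul_one_eq_eval {k : ℕ} (V1 : Matrix (Fin k) (Fin k) ℝ) (t : ℝ) :
    ((-V1).charpoly).eval t = (V1 + t • (1 : Matrix (Fin k) (Fin k) ℝ)).det := by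
  rw [Matrix.charpoly]
  rw [show Polynomial.eval t ((charmatrix (-V1)).det)
      = (Polynomial.evalRingHom t) ((charmatrix (-V1)).det) from rfl]
  rw [RingHom.map_det]
  congr 1
  ext i j
  by_cases h : i = j <;>
    simp [charmatrix_apply, Matrix.diagonal_apply, Matrix.one_apply, h, Matrix.smul_apply,
      add_comm]

/-- Main approximation guarantee with `ε = 0`: a total least squares solution exists
whose cost is within an arbitrarily small additive `δ` of the optimal rank-`n`
approximation cost `OPT`. -/
theorem total_least_squares_additive_approx
    (m n d : ℕ)
    (A : Matrix (Fin m) (Fin n) ℝ) (B : Matrix (Fin m) (Fin d) ℝ) :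
    ∀ δ : ℝ, 0 < δ →
      ∃ (X : Matrix (Fin n) (Fin d) ℝ) (Ahat : Matrix (Fin m) (Fin n) ℝ),
        frobNorm (Matrix.fromCols Ahat (Ahat * X) - Matrix.fromCols A B) ≤
          sInf {c : ℝ | ∃ C' : Matrix (Fin m) (Fin n ⊕ Fin d) ℝ, C'.rank ≤ n ∧
            c = frobNorm (C' - Matrix.fromCols A B)} + δ := by
  intro δ hδ
  set AB := Matrix.fromCols A B with hAB
  set S : Set ℝ := {c : ℝ | ∃ C' : Matrix (Fin m) (Fin n ⊕ Fin d) ℝ, C'.rank ≤ n ∧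
      c = frobNorm (C' - AB)} with hS
  have hne : S.Nonempty :=
    ⟨frobNorm ((0 : Matrix (Fin m) (Fin n ⊕ Fin d) ℝ) - AB),
      ⟨0, by simp [Matrix.rank_zero], rfl⟩⟩
  obtain ⟨c, hcS, hclt⟩ := Real.lt_sInf_add_pos hne (half_pos hδ)
  obtain ⟨C', hrank, rfl⟩ := hcS
  obtain ⟨U, V, rfl⟩ := exists_factorization n C' hrank
  set V1 := V.toCols₁ with hV1
  set V2 := V.toCols₂ with hV2
  set P := (-V1).charpoly with hP
  have hPne : P ≠ 0 := (Matrix.charpoly_monic _).ne_zero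
  have hFpos : (0 : ℝ) < frobNorm U + 1 := by nlinarith [frobNorm_nonneg U]
  set ε := δ / (2 * (frobNorm U + 1)) with hε
  have hεpos : 0 < ε := by positivity
  obtain ⟨t, ht⟩ :=
    ((Set.Ioo_infinite hεpos).diff (Polynomial.finite_setOf_isRoot hPne)).nonempty
  have ht0 : 0 < t := ht.1.1
  have htε : t < ε := ht.1.2
  set M1 := V1 + t • (1 : Matrix (Fin n) (Fin n) ℝ) with hM1
  have hdet : M1.det ≠ 0 := by
    intro h0
    exact ht.2 (by rwa [Set.mem_setOf_eq, Polynomial.IsRoot, hP, det_add_smul_one_eq_eval])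
  have hunit : IsUnit M1.det := isUnit_iff_ne_zero.2 hdet
  refine ⟨M1⁻¹ * V2, U * M1, ?_⟩
  have hAX : (U * M1) * (M1⁻¹ * V2) = U * V2 := by
    rw [Matrix.mul_assoc, ← Matrix.mul_assoc M1, Matrix.mul_nonsing_inv _ hunit,
      Matrix.one_mul]
  have hUV : U * V = fromCols (U * V1) (U * V2) := by
    conv_lhs => rw [← fromCols_toCols V]
    rw [Matrix.mul_fromCols]
  have hUM1 : U * M1 = U * V1 + t • U := by
    rw [hM1, Matrix.mul_add, Matrix.mul_smul, Matrix.mul_one]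
  have hdecomp : fromCols (U * M1) ((U * M1) * (M1⁻¹ * V2))
      = U * V + fromCols (t • U) (0 : Matrix (Fin m) (Fin d) ℝ) := by
    rw [hAX, hUV]
    ext i (j | j) <;>
      simp [hUM1, Matrix.add_apply]
  calc frobNorm (fromCols (U * M1) ((U * M1) * (M1⁻¹ * V2)) - AB)
      = frobNorm ((U * V - AB) + fromCols (t • U) (0 : Matrix (Fin m) (Fin d) ℝ)) := by
        rw [hdecomp, add_sub_right_comm]
    _ ≤ frobNorm (U * V - AB) + frobNorm (fromCols (t • U) (0 : Matrix (Fin m) (Fin d) ℝ)) :=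
        frobNorm_add_le _ _
    _ = frobNorm (U * V - AB) + |t| * frobNorm U := by
        rw [frobNorm_fromCols_zero, frobNorm_smul]
    _ ≤ sInf S + δ := by
        have h1 : |t| * frobNorm U ≤ δ / 2 := by
          rw [abs_of_pos ht0]
          have h2 : t * frobNorm U ≤ t * (frobNorm U + 1) := by nlinarith
          have h3 : t * (frobNorm U + 1) < ε * (frobNorm U + 1) := by nlinarith
          have h4 : ε * (frobNorm U + 1) = δ / 2 := by
            rw [hε]; field_simp
          linarith
        linarith
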